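/- For positive integers n and d, the poset (M_d^n, A_{n,d}) is order-isomorphic to the poset of Ferrers diagrams (partitions) fitting inside a d × (n−1) box, i.e. weakly decreasing sequences λ_1 ≥ ⋯ ≥ λ_d of nonnegative integers with λ_1 ≤ n−1, ordered by pointwise comparison. In particular (M_d^n, A_{n,d}) is a distributive lattice. -/

import Mathlib

/-- The free abelian monoid `M` on variables `x₁, x₂, …`, identified with
finitely supported exponent vectors; index `i : ℕ` represents the variable `x_{i+1}`. -/
abbrev Mon : Type := ℕ →₀ ℕ

/-- Total degree of a monomial. -/
def deg (m : Mon) : ℕ := m.sum fun _ v => v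

/-- `m` is a monomial in the first `n` variables, i.e. `m ∈ Mⁿ`. -/
def InVars (n : ℕ) (m : Mon) : Prop := ∀ i ∈ m.support, i < n

/-- Elementary move: `m = (x_i / x_j) · m'` for some `i < j` with `x_j ∣ m'`. -/
def ElemMove (m m' : Mon) : Prop :=
  ∃ i j : ℕ, i < j ∧ m + Finsupp.single j 1 = m' + Finsupp.single i 1

/-- Stable move: `m = (x_i / x_s) · m'` where `s = maxsupp m'` and `i < s`. -/
def StableMove (m m' : Mon) : Prop :=
  ∃ s i : ℕ, i < s ∧ m' s ≠ 0 ∧ (∀ t, s < t → m' t = 0) ∧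
    m + Finsupp.single s 1 = m' + Finsupp.single i 1

/-- The divisibility relation `D`: `(m, m') ∈ D` iff `m'` divides `m`. -/
def Dvd' (m m' : Mon) : Prop := ∃ t : Mon, m = m' + t

lemma sorted_get_le_iff {L : List ℕ} (hL : L.Pairwise (· ≤ ·)) (t : ℕ) :
    ∀ k (hk : k < L.length), (L[k] ≤ t ↔ k < L.countP (· ≤ t)) := by
  induction L with
  | nil => intro k hk; simp at hk
  | cons a L ih =>
    have ha : ∀ x ∈ L, a ≤ x := fun x hx => (List.pairwise_cons.mp hL).1 x hx
    have hLs : L.Pairwise (· ≤ ·) := (List.pairwise_cons.mp hL).2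
    intro k hk
    by_cases hat : a ≤ t
    · cases k with
      | zero => simp [List.countP_cons, hat]
      | succ j =>
        have hj : j < L.length := by simpa using hk
        have h2 := ih hLs j hj
        simp only [List.getElem_cons_succ, List.countP_cons]
        simp only [hat, decide_eq_true_eq, if_pos]
        omega
    · have hz : L.countP (fun x => decide (x ≤ t)) = 0 := by
        rw [List.countP_eq_zero]
        intro x hx
        simp only [decide_eq_true_eq]
        exact fun hxt => hat (le_trans (ha x hx) hxt)
      cases k with
      | zero => simp [List.countP_cons, hat, hz]
      | succ j =>
        have hj : j < L.length := by simpa using hk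
        have hgt : ¬ L[j] ≤ t := fun h => hat (le_trans (ha _ (L.getElem_mem hj)) h)
        simp only [List.getElem_cons_succ, List.countP_cons]
        simp [hat, hz, hgt]

lemma sorted_pointwise_iff {L L' : List ℕ} (hL : L.Pairwise (· ≤ ·)) (hL' : L'.Pairwise (· ≤ ·))
    (hlen : L.length = L'.length) :
    (∀ k (h : k < L.length), L[k] ≤ L'[k]'(hlen ▸ h)) ↔
      ∀ t, L'.countP (· ≤ t) ≤ L.countP (· ≤ t) := by
  constructor
  · intro h t
    set c' := L'.countP (· ≤ t) with hc'
    rcases Nat.eq_zero_or_pos c' with h0 | hpos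
    · omega
    · have hc'le : c' ≤ L'.length := List.countP_le_length
      have h1 : c' - 1 < L.length := by omega
      have h2 : L[c'-1] ≤ t := le_trans (h _ h1)
        ((sorted_get_le_iff hL' t _ (by omega)).mpr (by omega))
      have := (sorted_get_le_iff hL t _ h1).mp h2
      omega
  · intro h k hk
    have hk' : k < L'.length := hlen ▸ hk
    have h1 : k < L'.countP (· ≤ L'[k]) := (sorted_get_le_iff hL' _ k hk').mp le_rfl
    exact (sorted_get_le_iff hL _ k hk).mpr (lt_of_lt_of_le h1 (h _))

def MoveM (M M' : Multiset ℕ) : Prop := ∃ i j : ℕ, i < j ∧ M + {j} = M' + {i}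

def cnt (t : ℕ) (M : Multiset ℕ) : ℕ := M.countP (· ≤ t)

lemma cnt_coe (t : ℕ) (L : List ℕ) : cnt t (↑L) = L.countP (· ≤ t) := by
  simp [cnt, Multiset.coe_countP]

lemma cnt_sort (t : ℕ) (M : Multiset ℕ) : (M.sort (· ≤ ·)).countP (· ≤ t) = cnt t M := by
  rw [← cnt_coe, Multiset.sort_eq]

lemma cnt_singleton (t a : ℕ) : cnt t {a} = if a ≤ t then 1 else 0 := by
  have : ({a} : Multiset ℕ) = a ::ₘ 0 := rfl
  rw [cnt, this, Multiset.countP_cons, Multiset.countP_zero, zero_add]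

lemma moveM_card_cnt {M M' : Multiset ℕ} (h : MoveM M M') :
    Multiset.card M = Multiset.card M' ∧ ∀ t, cnt t M' ≤ cnt t M := by
  obtain ⟨i, j, hij, heq⟩ := h
  constructor
  · have := congrArg Multiset.card heq
    simp at this; omega
  · intro t
    have := congrArg (cnt t) heq
    simp only [cnt, Multiset.countP_add] at this
    have h1 : cnt t {j} ≤ cnt t {i} := by
      rw [cnt_singleton, cnt_singleton]
      split_ifs with h2 h3 <;> omega
    simp only [cnt] at h1 ⊢
    omega

lemma step_lemma (M M' : Multiset ℕ) (hcard : Multiset.card M = Multiset.card M')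
    (hcnt : ∀ t, cnt t M' ≤ cnt t M) (hne : M ≠ M') :
    ∃ M'', MoveM M'' M' ∧ Multiset.card M = Multiset.card M'' ∧
      (∀ t, cnt t M'' ≤ cnt t M) ∧ M''.sum + 1 = M'.sum := by
  set L := M.sort (· ≤ ·) with hLdef
  set L' := M'.sort (· ≤ ·) with hL'def
  have hL : L.Pairwise (· ≤ ·) := Multiset.pairwise_sort _ _
  have hL' : L'.Pairwise (· ≤ ·) := Multiset.pairwise_sort _ _
  have hlen : L.length = L'.length := by
    rw [hLdef, hL'def, Multiset.length_sort, Multiset.length_sort, hcard]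
  have hpw : ∀ k (h : k < L.length), L[k] ≤ L'[k]'(hlen ▸ h) :=
    (sorted_pointwise_iff hL hL' hlen).mpr (fun t => by rw [cnt_sort, cnt_sort]; exact hcnt t)
  have hLne : ∃ k, ∃ h1 : k < L.length, L[k] ≠ L'[k]'(hlen ▸ h1) := by
    by_contra hc
    push_neg at hc
    have : L = L' := List.ext_getElem hlen (fun i h1 h2 => hc i h1)
    apply hne
    rw [← Multiset.sort_eq M (· ≤ ·), ← Multiset.sort_eq M' (· ≤ ·), ← hLdef, ← hL'def, this]
  obtain ⟨k, hk, hkne⟩ := hLne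
  have hk' : k < L'.length := hlen ▸ hk
  set v := L'[k] with hvdef
  have hkv : L[k] < v := lt_of_le_of_ne (hpw k hk) hkne
  have hv1 : 1 ≤ v := by omega
  have hvmem : v ∈ M' := by
    rw [← Multiset.mem_sort (· ≤ ·), ← hL'def]; exact List.getElem_mem hk'
  have hce : v ::ₘ M'.erase v = M' := Multiset.cons_erase hvmem
  refine ⟨(v - 1) ::ₘ M'.erase v, ⟨v - 1, v, by omega, ?_⟩, ?_, ?_, ?_⟩
  · -- (v-1) ::ₘ erase + {v} = M' + {v-1}
    have hs : ∀ (a : ℕ) (s : Multiset ℕ), a ::ₘ s = {a} + s :=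
      fun a s => (Multiset.singleton_add a s).symm
    have h0 : ((v - 1) ::ₘ M'.erase v) + {v} = (v ::ₘ M'.erase v) + {v - 1} := by
      rw [hs, hs]
      abel
    rw [hce] at h0
    exact h0
  · have he := Multiset.card_erase_of_mem hvmem
    rw [Nat.pred_eq_sub_one] at he
    have hc1 : 1 ≤ Multiset.card M' := by
      have := Multiset.card_pos_iff_exists_mem.mpr ⟨v, hvmem⟩; omega
    simp only [Multiset.card_cons]
    omega
  · intro t
    have h1 : cnt t ((v - 1) ::ₘ M'.erase v) =
        cnt t (M'.erase v) + if v - 1 ≤ t then 1 else 0 := by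
      rw [cnt, cnt, Multiset.countP_cons]
    have h2 : cnt t M' = cnt t (M'.erase v) + if v ≤ t then 1 else 0 := by
      conv_lhs => rw [← hce]
      rw [cnt, cnt, Multiset.countP_cons]
    by_cases htv : v ≤ t
    · have e1 : cnt t ((v - 1) ::ₘ M'.erase v) = cnt t (M'.erase v) + 1 := by
        rw [h1, if_pos (by omega : v - 1 ≤ t)]
      have e2 : cnt t M' = cnt t (M'.erase v) + 1 := by rw [h2, if_pos htv]
      have := hcnt t
      omega
    · by_cases ht1 : v - 1 ≤ t
      · have hA : k + 1 ≤ L.countP (· ≤ t) := by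
          have hle : L[k] ≤ t := by omega
          have := (sorted_get_le_iff hL t k hk).mp hle
          omega
        have hB : cnt t M' ≤ k := by
          by_contra hB
          push_neg at hB
          have hlt : k < L'.countP (· ≤ t) := by rw [hL'def, cnt_sort]; exact hB
          have := (sorted_get_le_iff hL' t k hk').mpr hlt
          omega
        have hAM : k + 1 ≤ cnt t M := by rw [← cnt_sort (t := t) (M := M), ← hLdef]; exact hA
        have e1 : cnt t ((v - 1) ::ₘ M'.erase v) = cnt t (M'.erase v) + 1 := by
          rw [h1, if_pos ht1]
        have e2 : cnt t M' = cnt t (M'.erase v) + 0 := by rw [h2, if_neg htv]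
        omega
      · have e1 : cnt t ((v - 1) ::ₘ M'.erase v) = cnt t (M'.erase v) + 0 := by
          rw [h1, if_neg ht1]
        have e2 : cnt t M' = cnt t (M'.erase v) + 0 := by rw [h2, if_neg htv]
        have := hcnt t
        omega
  · have hs1 : ((v - 1) ::ₘ M'.erase v).sum = (M'.erase v).sum + (v - 1) := by
      rw [Multiset.sum_cons]; omega
    have hs2 : M'.sum = (M'.erase v).sum + v := by
      conv_lhs => rw [← hce]
      rw [Multiset.sum_cons]; omega
    omega

lemma reach_aux (M : Multiset ℕ) :
    ∀ N (M' : Multiset ℕ), M'.sum ≤ N → Multiset.card M = Multiset.card M' →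
      (∀ t, cnt t M' ≤ cnt t M) → Relation.ReflTransGen MoveM M M' := by
  intro N
  induction N with
  | zero =>
    intro M' hsum hcard hcnt
    by_cases hMM : M = M'
    · exact hMM ▸ Relation.ReflTransGen.refl
    · obtain ⟨M'', hmv, hc, hcn, hs⟩ := step_lemma M M' hcard hcnt hMM
      omega
  | succ N ih =>
    intro M' hsum hcard hcnt
    by_cases hMM : M = M'
    · exact hMM ▸ Relation.ReflTransGen.refl
    · obtain ⟨M'', hmv, hc, hcn, hs⟩ := step_lemma M M' hcard hcnt hMM
      exact Relation.ReflTransGen.tail (ih M'' (by omega) hc hcn) hmv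

lemma reach (M M' : Multiset ℕ) (hcard : Multiset.card M = Multiset.card M')
    (hcnt : ∀ t, cnt t M' ≤ cnt t M) : Relation.ReflTransGen MoveM M M' :=
  reach_aux M M'.sum M' le_rfl hcard hcnt

/-- Translation between `ElemMove` on `Mon` and `MoveM` on multisets -/
lemma elemMove_iff_moveM (m m' : Mon) :
    ElemMove m m' ↔ MoveM (Finsupp.toMultiset m) (Finsupp.toMultiset m') := by
  constructor
  · rintro ⟨i, j, hij, heq⟩
    refine ⟨i, j, hij, ?_⟩
    have := congrArg Finsupp.toMultiset heq
    simpa [Finsupp.toMultiset_add, Finsupp.toMultiset_single] using this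
  · rintro ⟨i, j, hij, heq⟩
    refine ⟨i, j, hij, ?_⟩
    have := congrArg Multiset.toFinsupp heq
    simpa [Multiset.toFinsupp_add, Multiset.toFinsupp_singleton] using this

lemma deg_eq_card (m : Mon) : deg m = Multiset.card (Finsupp.toMultiset m) :=
  (Finsupp.card_toMultiset m).symm

lemma rtg_cnt {m m' : Mon} (h : Relation.ReflTransGen ElemMove m m') :
    ∀ t, cnt t (Finsupp.toMultiset m') ≤ cnt t (Finsupp.toMultiset m) := by
  induction h with
  | refl => exact fun t => le_rfl
  | tail h1 h2 ih =>
    intro t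
    exact le_trans ((moveM_card_cnt ((elemMove_iff_moveM _ _).mp h2)).2 t) (ih t)

lemma rtg_iff_cnt (m m' : Mon) (hdeg : deg m = deg m') :
    Relation.ReflTransGen ElemMove m m' ↔
      ∀ t, cnt t (Finsupp.toMultiset m') ≤ cnt t (Finsupp.toMultiset m) := by
  constructor
  · exact rtg_cnt
  · intro h
    have hcard : Multiset.card (Finsupp.toMultiset m) = Multiset.card (Finsupp.toMultiset m') := by
      rw [← deg_eq_card, ← deg_eq_card, hdeg]
    have hr := reach _ _ hcard h
    have := Relation.ReflTransGen.lift (p := ElemMove) Multiset.toFinsupp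
      (fun a b hab => (elemMove_iff_moveM _ _).mpr (by
        rwa [Multiset.toFinsupp_toMultiset, Multiset.toFinsupp_toMultiset])) _ _ hr
    rwa [Function.onFun, Finsupp.toMultiset_toFinsupp, Finsupp.toMultiset_toFinsupp] at this

noncomputable def ascList (m : Mon) : List ℕ := (Finsupp.toMultiset m).sort (· ≤ ·)

lemma length_ascList (m : Mon) : (ascList m).length = deg m := by
  simp only [ascList, Multiset.length_sort, deg_eq_card]

lemma ascList_sorted (m : Mon) : (ascList m).Pairwise (· ≤ ·) := Multiset.pairwise_sort _ _

lemma ascList_mono (m : Mon) {i j : ℕ} (hj : j < (ascList m).length) (hij : i ≤ j) :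
    (ascList m)[i]'(lt_of_le_of_lt hij hj) ≤ (ascList m)[j] := by
  have := (ascList_sorted m).rel_get_of_le
    (a := ⟨i, lt_of_le_of_lt hij hj⟩) (b := ⟨j, hj⟩) (by exact hij)
  simpa using this

lemma ascList_lt {n : ℕ} {m : Mon} (h : InVars n m) {k : ℕ} (hk : k < (ascList m).length) :
    (ascList m)[k] < n := by
  have hmem : (ascList m)[k] ∈ ascList m := List.getElem_mem hk
  simp only [ascList, Multiset.mem_sort, Finsupp.mem_toMultiset] at hmem
  exact h _ hmem

/-- The order-reversing bijection to partitions in the d × (n-1) box. -/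
noncomputable def fmap (n d : ℕ) (a : {m : Mon // InVars n m ∧ deg m = d}) :
    {l : Fin d → ℕ // (∀ i j : Fin d, i ≤ j → l j ≤ l i) ∧ ∀ i, l i ≤ n - 1} :=
  ⟨fun i => n - 1 - (ascList a.1)[(i : ℕ)]'(by rw [length_ascList, a.2.2]; exact i.2),
   fun i j hij => Nat.sub_le_sub_left (ascList_mono a.1 _ hij) _,
   fun i => Nat.sub_le _ _⟩

lemma fmap_injective (n d : ℕ) (hn : 0 < n) : Function.Injective (fmap n d) := by
  intro a b hab
  have hlen : (ascList a.1).length = (ascList b.1).length := by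
    rw [length_ascList, length_ascList, a.2.2, b.2.2]
  have hL : ascList a.1 = ascList b.1 := by
    apply List.ext_getElem hlen
    intro k h1 h2
    have hk : k < d := by rwa [length_ascList, a.2.2] at h1
    have := congrFun (congrArg Subtype.val hab) ⟨k, hk⟩
    simp only [fmap] at this
    have ha' : (ascList a.1)[k] < n := ascList_lt a.2.1 h1
    have hb' : (ascList b.1)[k] < n := ascList_lt b.2.1 h2
    omega
  have : Finsupp.toMultiset a.1 = Finsupp.toMultiset b.1 := by
    rw [← Multiset.sort_eq (Finsupp.toMultiset a.1) (· ≤ ·),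
      ← Multiset.sort_eq (Finsupp.toMultiset b.1) (· ≤ ·)]
    exact congrArg _ hL
  have := congrArg Multiset.toFinsupp this
  rw [Finsupp.toMultiset_toFinsupp, Finsupp.toMultiset_toFinsupp] at this
  exact Subtype.ext this

lemma fmap_surjective (n d : ℕ) (hn : 0 < n) : Function.Surjective (fmap n d) := by
  rintro ⟨l, hdec, hbd⟩
  set L0 : List ℕ := List.ofFn (fun i : Fin d => n - 1 - l i) with hL0
  have hL0sorted : L0.Pairwise (· ≤ ·) := by
    rw [hL0, List.pairwise_ofFn]
    intro i j hij
    exact Nat.sub_le_sub_left (hdec i j hij.le) _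
  set m : Mon := Multiset.toFinsupp (↑L0) with hm
  have hmT : Finsupp.toMultiset m = ↑L0 := by rw [hm, Multiset.toFinsupp_toMultiset]
  have hdeg : deg m = d := by
    rw [deg_eq_card, hmT, Multiset.coe_card, hL0, List.length_ofFn]
  have hiv : InVars n m := by
    intro i hi
    rw [← Finsupp.mem_toMultiset, hmT, Multiset.mem_coe, hL0, List.mem_ofFn] at hi
    obtain ⟨k, hk⟩ := hi
    have hk' : n - 1 - l k = i := hk
    omega
  have hasc : ascList m = L0 := by
    apply List.Perm.eq_of_pairwise' (ascList_sorted m) hL0sorted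
    rw [← Multiset.coe_eq_coe, ascList, Multiset.sort_eq, hmT]
  refine ⟨⟨m, hiv, hdeg⟩, ?_⟩
  apply Subtype.ext
  funext i
  show n - 1 - (ascList m)[(i : ℕ)]'_ = l i
  have : (ascList m)[(i : ℕ)]'(by rw [length_ascList, hdeg]; exact i.2) = n - 1 - l i := by
    simp only [hasc, hL0]
    rw [List.getElem_ofFn]
  rw [this]
  have := hbd i
  omega

lemma fmap_order (n d : ℕ) (hn : 0 < n) (a b : {m : Mon // InVars n m ∧ deg m = d}) :
    Relation.ReflTransGen ElemMove a.1 b.1 ↔ ∀ i, (fmap n d b).1 i ≤ (fmap n d a).1 i := by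
  have hdeg : deg a.1 = deg b.1 := a.2.2.trans b.2.2.symm
  have hlenA : (ascList a.1).length = d := by rw [length_ascList, a.2.2]
  have hlenB : (ascList b.1).length = d := by rw [length_ascList, b.2.2]
  have hlen : (ascList a.1).length = (ascList b.1).length := by rw [hlenA, hlenB]
  rw [rtg_iff_cnt _ _ hdeg]
  have hpw := sorted_pointwise_iff (ascList_sorted a.1) (ascList_sorted b.1) hlen
  rw [show (∀ t, cnt t (Finsupp.toMultiset b.1) ≤ cnt t (Finsupp.toMultiset a.1)) ↔
      (∀ t, (ascList b.1).countP (· ≤ t) ≤ (ascList a.1).countP (· ≤ t)) from by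
    constructor <;> intro h t <;>
      [ (rw [ascList, ascList, cnt_sort, cnt_sort]; exact h t);
        (have := h t; rwa [ascList, ascList, cnt_sort, cnt_sort] at this) ]]
  rw [← hpw]
  constructor
  · intro h i
    exact Nat.sub_le_sub_left (h i.1 (by rw [hlenA]; exact i.2)) _
  · intro h k hk
    have hkd : k < d := by rwa [hlenA] at hk
    have h' : n - 1 - (ascList b.1)[k]'(by rw [hlenB]; exact hkd) ≤
        n - 1 - (ascList a.1)[k]'(by rw [hlenA]; exact hkd) := h ⟨k, hkd⟩
    have hA : (ascList a.1)[k]'(by rw [hlenA]; exact hkd) < n := ascList_lt a.2.1 _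
    have hB : (ascList b.1)[k]'(by rw [hlenB]; exact hkd) < n := ascList_lt b.2.1 _
    omega

/-- For positive integers `n, d`, the poset `(M_d^n, A_{n,d})`
(where `A_{n,d}` is the reflexive–transitive closure of elementary moves, which
preserve both degree and the variable range) is order-isomorphic to the poset of
partitions fitting inside a `d × (n-1)` box, i.e. weakly decreasing sequences
`λ₁ ≥ ⋯ ≥ λ_d` of nonnegative integers with `λ₁ ≤ n - 1`, ordered pointwise.
In particular `(M_d^n, A_{n,d})` is a distributive lattice. -/
theorem stmt5 (n d : ℕ) (hn : 0 < n) (hd : 0 < d) :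
    (∃ f : {m : Mon // InVars n m ∧ deg m = d} →
        {l : Fin d → ℕ // (∀ i j : Fin d, i ≤ j → l j ≤ l i) ∧ ∀ i, l i ≤ n - 1},
      Function.Bijective f ∧
      (∀ a b : {m : Mon // InVars n m ∧ deg m = d},
        Relation.ReflTransGen ElemMove a.1 b.1 ↔ ∀ i, (f b).1 i ≤ (f a).1 i)) ∧
    (∃ inst : DistribLattice {m : Mon // InVars n m ∧ deg m = d},
      ∀ a b, inst.le a b ↔ Relation.ReflTransGen ElemMove b.1 a.1) := by
  have hbij : Function.Bijective (fmap n d) :=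
    ⟨fmap_injective n d hn, fmap_surjective n d hn⟩
  refine ⟨⟨fmap n d, hbij, fmap_order n d hn⟩, ?_⟩
  letI maxT : Max {l : Fin d → ℕ // (∀ i j : Fin d, i ≤ j → l j ≤ l i) ∧ ∀ i, l i ≤ n - 1} :=
    ⟨fun a b => ⟨fun i => max (a.1 i) (b.1 i),
      fun i j hij => max_le_max (a.2.1 i j hij) (b.2.1 i j hij),
      fun i => max_le (a.2.2 i) (b.2.2 i)⟩⟩
  letI minT : Min {l : Fin d → ℕ // (∀ i j : Fin d, i ≤ j → l j ≤ l i) ∧ ∀ i, l i ≤ n - 1} :=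
    ⟨fun a b => ⟨fun i => min (a.1 i) (b.1 i),
      fun i j hij => min_le_min (a.2.1 i j hij) (b.2.1 i j hij),
      fun i => le_trans (min_le_left _ _) (a.2.2 i)⟩⟩
  letI dT : DistribLattice {l : Fin d → ℕ // (∀ i j : Fin d, i ≤ j → l j ≤ l i) ∧ ∀ i, l i ≤ n - 1} :=
    Function.Injective.distribLattice Subtype.val Subtype.val_injective Iff.rfl Iff.rfl
      (fun a b => funext fun i => rfl) (fun a b => funext fun i => rfl)
  let e : {m : Mon // InVars n m ∧ deg m = d} ≃
      {l : Fin d → ℕ // (∀ i j : Fin d, i ≤ j → l j ≤ l i) ∧ ∀ i, l i ≤ n - 1} :=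
    Equiv.ofBijective (fmap n d) hbij
  letI maxS : Max {m : Mon // InVars n m ∧ deg m = d} := ⟨fun a b => e.symm (e a ⊔ e b)⟩
  letI minS : Min {m : Mon // InVars n m ∧ deg m = d} := ⟨fun a b => e.symm (e a ⊓ e b)⟩
  letI leS : LE {m : Mon // InVars n m ∧ deg m = d} := ⟨fun a b => e a ≤ e b⟩
  letI ltS : LT {m : Mon // InVars n m ∧ deg m = d} := ⟨fun a b => e a < e b⟩
  letI dS : DistribLattice {m : Mon // InVars n m ∧ deg m = d} :=
    Function.Injective.distribLattice (⇑e) e.injective Iff.rfl Iff.rfl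
      (fun a b => e.apply_symm_apply _) (fun a b => e.apply_symm_apply _)
  refine ⟨dS, fun a b => ?_⟩
  have h1 : dS.le a b ↔ ∀ i, (fmap n d a).1 i ≤ (fmap n d b).1 i := Iff.rfl
  rw [h1]
  exact (fmap_order n d hn b a).symm
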